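/- arXiv:2209.08607 — 8 statements merged into one kernel-verified Lean document; each statement's English description precedes it below -/
import Mathlib

section
/- Let K be an algebraically closed field of characteristic zero. The image of the polynomial map K² → K² given by (x,y) ↦ (1 + xy, x + y² + xy³) is exactly K² ∖ {(0,0)}. In particular, there is a surjective polynomial map from the affine plane K² onto the punctured affine plane K² ∖ {(0,0)}. -/
/-- The image of the polynomial map `K² → K²`, `(x,y) ↦ (1 + xy, x + y² + xy³)`,
is exactly `K² \ {(0,0)}`. -/
theorem stmt_0 (K : Type*) [Field K] [IsAlgClosed K] [CharZero K] :
    Set.range (fun p : K × K => (1 + p.1 * p.2, p.1 + p.2 ^ 2 + p.1 * p.2 ^ 3)) =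
      {q : K × K | q ≠ (0, 0)} := by
  ext ⟨a, b⟩
  simp only [Set.mem_range, Set.mem_setOf_eq]
  constructor
  · rintro ⟨⟨x, y⟩, h⟩
    simp only [Prod.mk.injEq] at h
    obtain ⟨h1, h2⟩ := h
    intro heq
    rw [Prod.mk.injEq] at heq
    obtain ⟨ha, hb⟩ := heq
    rw [ha] at h1
    rw [hb] at h2
    have hx : x = 0 := by linear_combination h2 - y ^ 2 * h1
    have : (1 : K) = 0 := by linear_combination h1 - y * hx
    exact one_ne_zero this
  · intro hne
    by_cases ha : a = 0
    · have hb : b ≠ 0 := by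
        intro hb
        exact hne (by rw [ha, hb])
      refine ⟨(b, -b⁻¹), ?_⟩
      simp only [Prod.mk.injEq]
      constructor
      · rw [ha]; field_simp; ring
      · field_simp
        ring
    · obtain ⟨y, hy⟩ := IsAlgClosed.exists_root
        (Polynomial.C a * Polynomial.X ^ 3 - Polynomial.C b * Polynomial.X
          + Polynomial.C (a - 1)) (by
        have hdeg : (Polynomial.C a * Polynomial.X ^ 3 - Polynomial.C b * Polynomial.X
            + Polynomial.C (a - 1)).degree = 3 := by
          compute_degree!
        rw [hdeg]; norm_num)
      rw [Polynomial.IsRoot.def] at hy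
      simp only [Polynomial.eval_add, Polynomial.eval_sub, Polynomial.eval_mul,
        Polynomial.eval_pow, Polynomial.eval_C, Polynomial.eval_X] at hy
      refine ⟨(b - a * y ^ 2, y), ?_⟩
      simp only [Prod.mk.injEq]
      constructor
      · linear_combination -hy
      · linear_combination (-y ^ 2) * hy
end

section
/- Let K be an algebraically closed field of characteristic zero. The map K² → ℙ¹(K) sending (x,y) to the point with homogeneous coordinates [1 + xy : x + y² + xy³] is well defined (the two coordinates never vanish simultaneously) and surjective. -/
/-- The map `K² → ℙ¹(K)`, `(x,y) ↦ [1 + xy : x + y² + xy³]`, is well defined and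
surjective. -/
theorem stmt_2 (K : Type*) [Field K] [IsAlgClosed K] [CharZero K] :
    ∃ h : ∀ p : K × K,
        (![1 + p.1 * p.2, p.1 + p.2 ^ 2 + p.1 * p.2 ^ 3] : Fin 2 → K) ≠ 0,
      Function.Surjective
        (fun p : K × K => Projectivization.mk K
          (![1 + p.1 * p.2, p.1 + p.2 ^ 2 + p.1 * p.2 ^ 3] : Fin 2 → K) (h p)) := by
  have h : ∀ p : K × K,
      (![1 + p.1 * p.2, p.1 + p.2 ^ 2 + p.1 * p.2 ^ 3] : Fin 2 → K) ≠ 0 := by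
    intro p hp
    have h1 : 1 + p.1 * p.2 = 0 := congrFun hp 0
    have h2 : p.1 + p.2 ^ 2 + p.1 * p.2 ^ 3 = 0 := congrFun hp 1
    have : (1 : K) = 0 := by linear_combination (1 + p.2 ^ 3) * h1 - p.2 * h2
    exact one_ne_zero this
  refine ⟨h, ?_⟩
  intro q
  induction q using Projectivization.ind with
  | h v hv =>
    by_cases h0 : v 0 = 0
    · have h1 : v 1 ≠ 0 := by
        intro h1
        apply hv
        funext i
        fin_cases i <;> simpa [h0]
      refine ⟨(-1, 1), ?_⟩
      rw [Projectivization.mk_eq_mk_iff']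
      refine ⟨-(v 1)⁻¹, ?_⟩
      funext i
      fin_cases i <;> simp [h0] <;> field_simp
    · obtain ⟨y, hy⟩ := IsAlgClosed.exists_pow_nat_eq (v 1 / v 0) (n := 2) (by norm_num)
      refine ⟨(0, y), ?_⟩
      rw [Projectivization.mk_eq_mk_iff']
      refine ⟨(v 0)⁻¹, ?_⟩
      funext i
      fin_cases i <;> simp [hy] <;> field_simp
end

section
/- Let K be an algebraically closed field, let A be a finitely generated commutative K-algebra, let m be a natural number, and let φ : A → K[x₁,…,xₘ] be a K-algebra homomorphism into the polynomial algebra in m variables. Then the following are equivalent: (1) every K-algebra homomorphism A → K factors through φ, i.e., for every K-algebra homomorphism α : A → K there exists a K-algebra homomorphism β : K[x₁,…,xₘ] → K with β ∘ φ = α; (2) for every proper ideal I of A, the ideal of K[x₁,…,xₘ] generated by φ(I) is proper. -/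
/-- Zariski's lemma: for a finitely generated algebra over an algebraically closed field,
every maximal ideal is the kernel of a `K`-point. -/
lemma aux_point (K : Type*) [Field K] [IsAlgClosed K]
    (B : Type*) [CommRing B] [Algebra K B] [Algebra.FiniteType K B]
    (M : Ideal B) [M.IsMaximal] : ∃ α : B →ₐ[K] K, ∀ x ∈ M, α x = 0 := by
  letI : Field (B ⧸ M) := Ideal.Quotient.field M
  haveI : Algebra.FiniteType K (B ⧸ M) :=
    Algebra.FiniteType.of_surjective (Ideal.Quotient.mkₐ K M)
      (Ideal.Quotient.mkₐ_surjective K M)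
  haveI : Module.Finite K (B ⧸ M) := finite_of_finite_type_of_isJacobsonRing K _
  haveI : Algebra.IsIntegral K (B ⧸ M) := Algebra.IsIntegral.of_finite K _
  have hbij : Function.Bijective (Algebra.ofId K (B ⧸ M)) := by
    refine ⟨(algebraMap K (B ⧸ M)).injective, ?_⟩
    exact IsAlgClosed.algebraMap_bijective_of_isIntegral.2
  let e : K ≃ₐ[K] B ⧸ M := AlgEquiv.ofBijective (Algebra.ofId K (B ⧸ M)) hbij
  refine ⟨(e.symm : B ⧸ M →ₐ[K] K).comp (Ideal.Quotient.mkₐ K M), fun x hx => ?_⟩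
  simp [Ideal.Quotient.mkₐ_eq_mk, Ideal.Quotient.eq_zero_iff_mem.2 hx]

/-- For a finitely generated commutative algebra `A` over an algebraically closed field `K`
and a `K`-algebra homomorphism `φ : A → K[x₁,…,xₘ]`, every `K`-point of `A` lifts through
`φ` iff every proper ideal of `A` generates a proper ideal of the polynomial ring. -/
theorem stmt_3 (K : Type*) [Field K] [IsAlgClosed K]
    (A : Type*) [CommRing A] [Algebra K A] [Algebra.FiniteType K A]
    (m : ℕ) (φ : A →ₐ[K] MvPolynomial (Fin m) K) :
    (∀ α : A →ₐ[K] K, ∃ β : MvPolynomial (Fin m) K →ₐ[K] K, β.comp φ = α) ↔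
      (∀ I : Ideal A, I ≠ ⊤ → Ideal.map φ I ≠ ⊤) := by
  constructor
  · intro h I hI hmap
    obtain ⟨M, hM, hIM⟩ := Ideal.exists_le_maximal I hI
    obtain ⟨α, hα⟩ := aux_point K A M
    obtain ⟨β, hβ⟩ := h α
    have hker : Ideal.map φ I ≤ RingHom.ker (β : MvPolynomial (Fin m) K →+* K) := by
      rw [Ideal.map_le_iff_le_comap]
      intro x hx
      have : β (φ x) = α x := by
        have := congrArg (fun f => (f : A →ₐ[K] K) x) hβ
        simpa using this
      simp only [Ideal.mem_comap, RingHom.mem_ker]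
      rw [show ((β : MvPolynomial (Fin m) K →+* K) (φ x)) = β (φ x) from rfl, this,
        hα x (hIM hx)]
    rw [hmap] at hker
    have : (1 : MvPolynomial (Fin m) K) ∈ RingHom.ker (β : MvPolynomial (Fin m) K →+* K) :=
      hker Submodule.mem_top
    simp [RingHom.mem_ker] at this
  · intro h α
    set I : Ideal A := RingHom.ker (α : A →+* K) with hIdef
    have hI : I ≠ ⊤ := by
      intro htop
      have : (1 : A) ∈ I := htop ▸ Submodule.mem_top
      simp [hIdef, RingHom.mem_ker] at this
    obtain ⟨M, hM, hIM⟩ := Ideal.exists_le_maximal _ (h I hI)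
    obtain ⟨β, hβ⟩ := aux_point K (MvPolynomial (Fin m) K) M
    refine ⟨β, ?_⟩
    ext a
    have hmem : a - algebraMap K A (α a) ∈ I := by
      simp [hIdef, RingHom.mem_ker, map_sub]
    have : φ a - algebraMap K (MvPolynomial (Fin m) K) (α a) ∈ Ideal.map φ I := by
      have := Ideal.mem_map_of_mem φ hmem
      simpa [map_sub, AlgHom.commutes] using this
    have h0 := hβ _ (hIM this)
    have : β (φ a) - α a = 0 := by
      rw [map_sub] at h0
      simpa [AlgHom.commutes] using h0
    simpa [sub_eq_zero] using this
end

section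
/- Let K be an algebraically closed field of characteristic zero, and let φ : K^m → K^n be a polynomial map with image S = φ(K^m) ⊆ K^n. Then for every finite subset F ⊆ S there exists a polynomial map γ : K → K^n whose image contains F and is contained in S. In other words, every image of an affine space under a polynomial map is strongly 𝔸¹-connected. -/
/-- The image of a polynomial map `K^m → K^n` is strongly `𝔸¹`-connected: every finite
subset of the image is contained in the image of a polynomial map `K → K^n` whose image
lies in the image of the original map. -/
theorem stmt_6 (K : Type*) [Field K] [IsAlgClosed K] [CharZero K] (m n : ℕ)
    (f : Fin n → MvPolynomial (Fin m) K)
    (F : Set (Fin n → K)) (hFfin : F.Finite)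
    (hFS : F ⊆ Set.range (fun v : Fin m → K => fun j : Fin n => MvPolynomial.eval v (f j))) :
    ∃ γ : Fin n → Polynomial K,
      F ⊆ Set.range (fun t : K => fun j : Fin n => (γ j).eval t) ∧
      Set.range (fun t : K => fun j : Fin n => (γ j).eval t) ⊆
        Set.range (fun v : Fin m → K => fun j : Fin n => MvPolynomial.eval v (f j)) := by
  classical
  haveI : Fintype F := hFfin.fintype
  -- choose preimages
  choose g hg using fun x : F => hFS x.2
  -- injective nodes
  let e : F ≃ Fin (Fintype.card F) := Fintype.equivFin F
  let node : F → K := fun x => ((e x : ℕ) : K)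
  have hnode : Function.Injective node := by
    intro a b h
    have : ((e a : ℕ) : K) = ((e b : ℕ) : K) := h
    exact e.injective (Fin.ext (Nat.cast_injective this))
  -- interpolating curve in K^m
  let δ : Fin m → Polynomial K := fun i =>
    Lagrange.interpolate Finset.univ node (fun x => g x i)
  have hδ : ∀ x : F, ∀ i, (δ i).eval (node x) = g x i := by
    intro x i
    exact Lagrange.eval_interpolate_at_node _ (hnode.injOn) (Finset.mem_univ x)
  let γ : Fin n → Polynomial K := fun j => MvPolynomial.aeval δ (f j)
  have key : ∀ (t : K) (j : Fin n),
      (γ j).eval t = MvPolynomial.eval (fun i => (δ i).eval t) (f j) := by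
    intro t j
    show (Polynomial.aeval t : Polynomial K →ₐ[K] K) (MvPolynomial.aeval δ (f j)) = _
    rw [MvPolynomial.comp_aeval_apply]
    simp only [Polynomial.coe_aeval_eq_eval]
    rw [← MvPolynomial.coe_aeval_eq_eval]
    rfl
  refine ⟨γ, ?_, ?_⟩
  · intro x hx
    refine ⟨node ⟨x, hx⟩, ?_⟩
    funext j
    simp only [key]
    rw [show (fun i => (δ i).eval (node ⟨x, hx⟩)) = g ⟨x, hx⟩ from funext (hδ ⟨x, hx⟩)]
    exact congrFun (hg ⟨x, hx⟩) j
  · rintro _ ⟨t, rfl⟩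
    exact ⟨fun i => (δ i).eval t, by funext j; simp [key]⟩
end

section
/- Let K be a field of characteristic zero and let k ≥ 1 be an integer. Consider the map ψ⁺ : K² → K³ given by ψ⁺(t,s) = (t^k·s − 1, t, (t^k·s − 2)·s). Then ψ⁺ is injective, and its image is exactly the set {(a,b,c) ∈ K³ : a² − b^k·c = 1 and ¬(a = 1 ∧ b = 0)}. In other words, the complement in the surface X = {(a,b,c) ∈ K³ : a² − b^k·c = 1} of the curve {a = 1, b = 0} is the bijective polynomial image of the affine plane K². -/
/-- The map `ψ⁺(t,s) = (t^k·s − 1, t, (t^k·s − 2)·s)` is injective with image exactly the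
complement in the surface `{a² − b^k·c = 1}` of the curve `{a = 1, b = 0}`. -/
theorem stmt_7 (K : Type*) [Field K] [CharZero K] (k : ℕ) (hk : 1 ≤ k) :
    Function.Injective
      (fun p : K × K => (p.1 ^ k * p.2 - 1, p.1, (p.1 ^ k * p.2 - 2) * p.2)) ∧
    Set.range (fun p : K × K => (p.1 ^ k * p.2 - 1, p.1, (p.1 ^ k * p.2 - 2) * p.2)) =
      {q : K × K × K | q.1 ^ 2 - q.2.1 ^ k * q.2.2 = 1 ∧ ¬(q.1 = 1 ∧ q.2.1 = 0)} := by
  constructor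
  · rintro ⟨t1, s1⟩ ⟨t2, s2⟩ h
    simp only [Prod.mk.injEq] at h
    obtain ⟨h1, h2, h3⟩ := h
    subst h2
    by_cases ht : t1 = 0
    · subst ht
      have hk0 : (0 : K) ^ k = 0 := zero_pow (by omega)
      rw [hk0] at h3
      simp only [zero_mul, zero_sub] at h3
      have : s1 = s2 := mul_left_cancel₀ (by norm_num : (-2 : K) ≠ 0) h3
      simp [this]
    · have hpk : t1 ^ k ≠ 0 := pow_ne_zero _ ht
      have : t1 ^ k * s1 = t1 ^ k * s2 := by linear_combination h1
      have : s1 = s2 := mul_left_cancel₀ hpk this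
      simp [this]
  · ext ⟨a, b, c⟩
    simp only [Set.mem_range, Set.mem_setOf_eq, Prod.mk.injEq, Prod.exists]
    constructor
    · rintro ⟨t, s, h1, h2, h3⟩
      subst h2
      constructor
      · rw [← h1, ← h3]; ring
      · rintro ⟨ha, hb⟩
        rw [hb] at h1
        rw [zero_pow (by omega : k ≠ 0)] at h1
        rw [← h1] at ha
        norm_num at ha
    · rintro ⟨heq, hne⟩
      by_cases hb : b = 0
      · subst hb
        have hk0 : (0 : K) ^ k = 0 := zero_pow (by omega)
        rw [hk0, zero_mul, sub_zero] at heq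
        have ha : a = -1 := by
          have h : (a - 1) * (a + 1) = 0 := by linear_combination heq
          rcases mul_eq_zero.mp h with h | h
          · exact absurd ⟨by linear_combination h, rfl⟩ hne
          · linear_combination h
        refine ⟨0, -c / 2, ?_, rfl, ?_⟩
        · rw [hk0]; simp [ha]
        · rw [hk0]; field_simp; ring
      · have hpk : b ^ k ≠ 0 := pow_ne_zero _ hb
        refine ⟨b, (a + 1) / b ^ k, by field_simp; ring, rfl, ?_⟩
        field_simp
        linear_combination heq
end

section
/- Let K be a field of characteristic zero and let k ≥ 1 be an integer. Consider the maps ψ⁺, ψ⁻ : K² → K³ given by ψ⁺(t,s) = (t^k·s − 1, t, (t^k·s − 2)·s) and ψ⁻(t,s) = (t^k·s + 1, t, (t^k·s + 2)·s). Then both ψ⁺ and ψ⁻ are injective, both of their images are contained in the surface X = {(a,b,c) ∈ K³ : a² − b^k·c = 1}, and the union of their images equals X. In other words, the surface X is covered by two subsets, each of which is a bijective polynomial image of the affine plane K². -/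
lemma aux_inj (K : Type*) [Field K] [CharZero K] (k : ℕ) (hk : 1 ≤ k) (c : K)
    (hc : c ≠ 0) :
    Function.Injective
      (fun p : K × K => (p.1 ^ k * p.2 + c, p.1, (p.1 ^ k * p.2 + 2 * c) * p.2)) := by
  rintro ⟨t1, s1⟩ ⟨t2, s2⟩ h
  simp only [Prod.mk.injEq] at h
  obtain ⟨h1, h2, h3⟩ := h
  subst h2
  have h1' : t1 ^ k * s1 = t1 ^ k * s2 := by linear_combination h1
  rcases eq_or_ne t1 0 with ht | ht
  · subst ht
    have hz : (0 : K) ^ k = 0 := zero_pow (by omega)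
    rw [hz] at h3
    simp only [zero_mul, zero_add] at h3
    have h2c : (2 : K) * c ≠ 0 := mul_ne_zero two_ne_zero hc
    have := mul_left_cancel₀ h2c h3
    simp [this]
  · have : s1 = s2 := mul_left_cancel₀ (pow_ne_zero k ht) h1'
    simp [this]

/-- The maps `ψ⁺(t,s) = (t^k·s − 1, t, (t^k·s − 2)·s)` and
`ψ⁻(t,s) = (t^k·s + 1, t, (t^k·s + 2)·s)` are injective, their images lie in the surface
`X = {a² − b^k·c = 1}`, and the union of their images is all of `X`. -/
theorem stmt_8 (K : Type*) [Field K] [CharZero K] (k : ℕ) (hk : 1 ≤ k) :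
    Function.Injective
      (fun p : K × K => (p.1 ^ k * p.2 - 1, p.1, (p.1 ^ k * p.2 - 2) * p.2)) ∧
    Function.Injective
      (fun p : K × K => (p.1 ^ k * p.2 + 1, p.1, (p.1 ^ k * p.2 + 2) * p.2)) ∧
    Set.range (fun p : K × K => (p.1 ^ k * p.2 - 1, p.1, (p.1 ^ k * p.2 - 2) * p.2)) ⊆
      {q : K × K × K | q.1 ^ 2 - q.2.1 ^ k * q.2.2 = 1} ∧
    Set.range (fun p : K × K => (p.1 ^ k * p.2 + 1, p.1, (p.1 ^ k * p.2 + 2) * p.2)) ⊆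
      {q : K × K × K | q.1 ^ 2 - q.2.1 ^ k * q.2.2 = 1} ∧
    Set.range (fun p : K × K => (p.1 ^ k * p.2 - 1, p.1, (p.1 ^ k * p.2 - 2) * p.2)) ∪
      Set.range (fun p : K × K => (p.1 ^ k * p.2 + 1, p.1, (p.1 ^ k * p.2 + 2) * p.2)) =
        {q : K × K × K | q.1 ^ 2 - q.2.1 ^ k * q.2.2 = 1} := by
  have hinjm : Function.Injective
      (fun p : K × K => (p.1 ^ k * p.2 - 1, p.1, (p.1 ^ k * p.2 - 2) * p.2)) := by
    have := aux_inj K k hk (-1) (by norm_num)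
    convert this using 2 with p <;> ring_nf
  have hinjp : Function.Injective
      (fun p : K × K => (p.1 ^ k * p.2 + 1, p.1, (p.1 ^ k * p.2 + 2) * p.2)) := by
    have := aux_inj K k hk 1 (by norm_num)
    convert this using 2 with p <;> ring_nf
  have hsubm : Set.range (fun p : K × K => (p.1 ^ k * p.2 - 1, p.1, (p.1 ^ k * p.2 - 2) * p.2)) ⊆
      {q : K × K × K | q.1 ^ 2 - q.2.1 ^ k * q.2.2 = 1} := by
    rintro _ ⟨⟨t, s⟩, rfl⟩
    simp only [Set.mem_setOf_eq]
    ring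
  have hsubp : Set.range (fun p : K × K => (p.1 ^ k * p.2 + 1, p.1, (p.1 ^ k * p.2 + 2) * p.2)) ⊆
      {q : K × K × K | q.1 ^ 2 - q.2.1 ^ k * q.2.2 = 1} := by
    rintro _ ⟨⟨t, s⟩, rfl⟩
    simp only [Set.mem_setOf_eq]
    ring
  refine ⟨hinjm, hinjp, hsubm, hsubp, ?_⟩
  apply Set.Subset.antisymm (Set.union_subset hsubm hsubp)
  rintro ⟨a, b, c⟩ hq
  simp only [Set.mem_setOf_eq] at hq
  rcases eq_or_ne b 0 with hb | hb
  · subst hb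
    rw [zero_pow (by omega), zero_mul, sub_zero] at hq
    have h0 : (a - 1) * (a + 1) = 0 := by linear_combination hq
    rcases mul_eq_zero.1 h0 with h | h
    · -- a = 1, use ψ⁻ with t = 0, s = c/2
      right
      refine ⟨(0, c / 2), ?_⟩
      simp only [zero_pow (show k ≠ 0 by omega), zero_mul, zero_add, Prod.mk.injEq]
      refine ⟨by linear_combination -h, trivial, by ring⟩
    · -- a = -1, use ψ⁺ with t = 0, s = -c/2
      left
      refine ⟨(0, -c / 2), ?_⟩
      simp only [zero_pow (show k ≠ 0 by omega), zero_mul, zero_sub, Prod.mk.injEq]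
      refine ⟨by linear_combination -h, trivial, by ring⟩
  · left
    have hbk : b ^ k ≠ 0 := pow_ne_zero k hb
    refine ⟨(b, (a + 1) / b ^ k), ?_⟩
    simp only [Prod.mk.injEq]
    refine ⟨?_, trivial, ?_⟩
    · field_simp
      ring
    · field_simp
      linear_combination hq
end

section
/- Let K be an algebraically closed field of characteristic zero and let n ≥ 2 be an integer. Then there exist a natural number m and a polynomial map φ : K^m → K^n whose image is exactly K^n ∖ {0}, the complement of the origin. -/
open MvPolynomial

private def vx (n : ℕ) (i : Fin n) : Fin (3*n) := ⟨i.val, by have := i.isLt; omega⟩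
private def vc (n : ℕ) (i : Fin n) : Fin (3*n) := ⟨n + i.val, by have := i.isLt; omega⟩
private def vd (n : ℕ) (i : Fin n) : Fin (3*n) := ⟨2*n + i.val, by have := i.isLt; omega⟩

private def bld {K : Type*} [Field K] (n : ℕ) (a b c : Fin n → K) : Fin (3*n) → K :=
  fun k => if h : k.val < n then a ⟨k.val, h⟩
    else if h2 : k.val < n + n then b ⟨k.val - n, by omega⟩
    else c ⟨k.val - (n + n), by have := k.isLt; omega⟩

private lemma bld_vx {K : Type*} [Field K] {n : ℕ} (a b c : Fin n → K) (i : Fin n) :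
    bld n a b c (vx n i) = a i := by
  simp [bld, vx]

private lemma bld_vc {K : Type*} [Field K] {n : ℕ} (a b c : Fin n → K) (i : Fin n) :
    bld n a b c (vc n i) = b i := by
  have hi := i.isLt
  dsimp only [bld, vc]
  rw [dif_neg (by omega), dif_pos (by omega)]
  congr 1
  exact Fin.ext (by simp)

private lemma bld_vd {K : Type*} [Field K] {n : ℕ} (a b c : Fin n → K) (i : Fin n) :
    bld n a b c (vd n i) = c i := by
  have hi := i.isLt
  dsimp only [bld, vd]
  rw [dif_neg (by omega), dif_neg (by omega)]
  congr 1
  exact Fin.ext (by simp; omega)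

private noncomputable def P1 (K : Type*) [Field K] (n : ℕ) [NeZero n] :
    MvPolynomial (Fin (3*n)) K :=
  1 + ∑ i ∈ Finset.univ.erase (0 : Fin n), X (vc n i) * X (vx n i)

private noncomputable def F (K : Type*) [Field K] (n : ℕ) [NeZero n] (j : Fin n) :
    MvPolynomial (Fin (3*n)) K :=
  if j = 0 then P1 K n else X (vx n j) + X (vd n j) * P1 K n

private lemma eval_P1 {K : Type*} [Field K] {n : ℕ} [NeZero n] (v : Fin (3*n) → K) :
    eval v (P1 K n) = 1 + ∑ i ∈ Finset.univ.erase (0 : Fin n), v (vc n i) * v (vx n i) := by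
  simp [P1]

/-- For `n ≥ 2` there is a polynomial map `K^m → K^n` whose image is exactly the
complement of the origin. -/
theorem stmt_9 (K : Type*) [Field K] [IsAlgClosed K] [CharZero K] (n : ℕ) (hn : 2 ≤ n) :
    ∃ (m : ℕ) (f : Fin n → MvPolynomial (Fin m) K),
      Set.range (fun v : Fin m → K => fun j : Fin n => MvPolynomial.eval v (f j)) =
        {w : Fin n → K | w ≠ 0} := by
  haveI : NeZero n := ⟨by omega⟩
  refine ⟨3*n, F K n, ?_⟩
  ext w
  simp only [Set.mem_range, Set.mem_setOf_eq]
  constructor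
  · rintro ⟨v, rfl⟩
    intro h0
    have hj : ∀ j : Fin n, eval v (F K n j) = 0 := fun j => congrFun h0 j
    have hA : eval v (P1 K n) = 0 := by simpa [F] using hj 0
    have hx : ∀ j : Fin n, j ≠ 0 → v (vx n j) = 0 := by
      intro j hj'
      have := hj j
      simpa [F, hj', hA] using this
    have h1 : eval v (P1 K n) = 1 := by
      rw [eval_P1]
      rw [Finset.sum_eq_zero (fun i hi => by
        rw [hx i (Finset.mem_erase.1 hi).1, mul_zero])]
      ring
    rw [hA] at h1
    exact zero_ne_one h1
  · intro hw
    by_cases hcase : ∃ j : Fin n, j ≠ 0 ∧ w j ≠ 0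
    · obtain ⟨j₀, hj₀, hwj₀⟩ := hcase
      set b : Fin n → K := fun i => if i = j₀ then (w 0 - 1) / w j₀ else 0 with hb
      refine ⟨bld n w b 0, ?_⟩
      have hP : eval (bld n w b 0) (P1 K n) = w 0 := by
        rw [eval_P1]
        have : ∀ i ∈ Finset.univ.erase (0 : Fin n),
            (bld n w b 0) (vc n i) * (bld n w b 0) (vx n i)
              = if i = j₀ then (w 0 - 1) / w j₀ * w j₀ else 0 := by
          intro i _
          rw [bld_vc, bld_vx, hb]
          by_cases h : i = j₀ <;> simp [h]
        rw [Finset.sum_congr rfl this, Finset.sum_ite_eq' _ j₀,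
          if_pos (Finset.mem_erase.2 ⟨hj₀, Finset.mem_univ _⟩),
          div_mul_cancel₀ _ hwj₀]
        ring
      funext j
      by_cases h : j = 0
      · subst h; simpa [F] using hP
      · simp [F, h, bld_vx, bld_vd, hP]
    · push_neg at hcase
      have hw0 : w 0 ≠ 0 := by
        intro h
        apply hw
        funext j
        by_cases hj' : j = 0
        · subst hj'; exact h
        · exact hcase j hj'
      set j₁ : Fin n := ⟨1, by omega⟩ with hj₁def
      have hj₁0 : j₁ ≠ 0 := by
        intro h
        have := congrArg Fin.val h
        simp [hj₁def] at this
      set a : Fin n → K := fun i => if i = j₁ then w 0 else 0 with ha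
      set b : Fin n → K := fun i => if i = j₁ then (w 0 - 1) / w 0 else 0 with hb
      set c : Fin n → K := fun i => if i = j₁ then (-1 : K) else 0 with hc
      refine ⟨bld n a b c, ?_⟩
      have hP : eval (bld n a b c) (P1 K n) = w 0 := by
        rw [eval_P1]
        have : ∀ i ∈ Finset.univ.erase (0 : Fin n),
            (bld n a b c) (vc n i) * (bld n a b c) (vx n i)
              = if i = j₁ then (w 0 - 1) / w 0 * w 0 else 0 := by
          intro i _
          rw [bld_vc, bld_vx, ha, hb]
          by_cases h : i = j₁ <;> simp [h]
        rw [Finset.sum_congr rfl this, Finset.sum_ite_eq' _ j₁,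
          if_pos (Finset.mem_erase.2 ⟨hj₁0, Finset.mem_univ _⟩),
          div_mul_cancel₀ _ hw0]
        ring
      funext j
      by_cases h : j = 0
      · subst h; simpa [F] using hP
      · have hwj : w j = 0 := hcase j h
        by_cases h1 : j = j₁
        · subst h1
          simp only [F, if_neg h, map_add, map_mul, eval_X, hP]
          rw [bld_vx, bld_vd, ha, hc]
          simp [hwj]
        · simp only [F, if_neg h, map_add, map_mul, eval_X, hP]
          rw [bld_vx, bld_vd, ha, hc]
          simp [h1, hwj]
end

section
/- Let K be an algebraically closed field of characteristic zero and let n ≥ 1 be an integer. Then there exist a natural number m and polynomials f₀, f₁, …, f_n in m variables over K such that: (1) for every v ∈ K^m, not all of f₀(v), …, f_n(v) are zero; and (2) the induced map K^m → ℙⁿ(K) sending v to the point with homogeneous coordinates [f₀(v) : ⋯ : f_n(v)] is surjective. In other words, projective n-space over K is the image of a morphism from an affine space. -/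
private lemma mk_congr (K : Type*) [Field K] {n : ℕ} (a b : Fin (n+1) → K) (ha : a ≠ 0)
    (hb : b ≠ 0) (h : a = b) : Projectivization.mk K a ha = Projectivization.mk K b hb := by
  subst h; rfl

/-- Projective `n`-space over `K` is the image of a morphism from an affine space: there
are polynomials `f₀,…,fₙ` in `m` variables, never simultaneously vanishing, inducing a
surjection `K^m → ℙⁿ(K)`. -/
theorem stmt_10 (K : Type*) [Field K] [IsAlgClosed K] [CharZero K] (n : ℕ) (hn : 1 ≤ n) :
    ∃ (m : ℕ) (f : Fin (n + 1) → MvPolynomial (Fin m) K)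
      (h : ∀ v : Fin m → K, (fun i : Fin (n + 1) => MvPolynomial.eval v (f i)) ≠ 0),
      Function.Surjective
        (fun v : Fin m → K =>
          Projectivization.mk K (fun i : Fin (n + 1) => MvPolynomial.eval v (f i)) (h v)) := by
  set f : Fin (n + 1) → MvPolynomial (Fin (2 * n)) K := fun i =>
    if hi : (i : ℕ) < n then MvPolynomial.X ⟨i, by omega⟩
    else 1 - ∑ j : Fin n, MvPolynomial.X (⟨j, by omega⟩ : Fin (2 * n)) *
        MvPolynomial.X (⟨n + j, by omega⟩ : Fin (2 * n)) with hf
  have heval : ∀ (v : Fin (2 * n) → K) (i : Fin (n + 1)),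
      MvPolynomial.eval v (f i) =
        if hi : (i : ℕ) < n then v ⟨i, by omega⟩
        else 1 - ∑ j : Fin n, v ⟨j, by omega⟩ * v ⟨n + j, by omega⟩ := by
    intro v i
    by_cases hi : (i : ℕ) < n
    · simp [hf, hi]
    · simp [hf, hi]
  have hlastn : ¬ ((Fin.last n : Fin (n + 1)) : ℕ) < n := by simp
  have hne : ∀ v : Fin (2 * n) → K,
      (fun i : Fin (n + 1) => MvPolynomial.eval v (f i)) ≠ 0 := by
    intro v hv
    have hlast := congrFun hv (Fin.last n)
    rw [heval, dif_neg hlastn] at hlast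
    simp only [Pi.zero_apply] at hlast
    have hzero : ∀ j : Fin n, v ⟨j, by omega⟩ = 0 := by
      intro j
      have := congrFun hv ⟨j, by omega⟩
      rw [heval] at this
      simpa [j.isLt] using this
    have : (∑ j : Fin n, v ⟨j, by omega⟩ * v ⟨n + j, by omega⟩) = 0 :=
      Finset.sum_eq_zero (fun j _ => by rw [hzero j, zero_mul])
    rw [this] at hlast
    simp at hlast
  refine ⟨2 * n, f, hne, ?_⟩
  intro p
  induction p using Projectivization.ind with
  | h w hw =>
    by_cases h0 : ∀ j : Fin (n + 1), (j : ℕ) < n → w j = 0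
    · -- w is supported at the last coordinate
      have hwl : w (Fin.last n) ≠ 0 := by
        intro hl
        apply hw
        funext j
        by_cases hj : (j : ℕ) < n
        · exact h0 j hj
        · have hje : j = Fin.last n := Fin.ext (by have := j.isLt; simp only [Fin.val_last]; omega)
          rw [hje]; exact hl
      refine ⟨0, ?_⟩
      dsimp only
      rw [Projectivization.mk_eq_mk_iff]
      refine ⟨(Units.mk0 (w (Fin.last n)) hwl)⁻¹, ?_⟩
      funext i
      simp only [Pi.smul_apply, Units.smul_def, smul_eq_mul, Units.val_inv_eq_inv_val,
        Units.val_mk0]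
      rw [heval]
      by_cases hi : (i : ℕ) < n
      · rw [dif_pos hi]
        simp [h0 i hi]
      · have hil : i = Fin.last n := Fin.ext (by have := i.isLt; simp only [Fin.val_last]; omega)
        rw [dif_neg hi]
        have hz : (∑ j : Fin n, (0 : Fin (2 * n) → K) ⟨j, by omega⟩ *
            (0 : Fin (2 * n) → K) ⟨n + j, by omega⟩) = 0 :=
          Finset.sum_eq_zero (fun j _ => by simp)
        rw [hz, hil, sub_zero, inv_mul_cancel₀ hwl]
    · push_neg at h0
      obtain ⟨j0, hj0, hwj0⟩ := h0
      set c : K := (1 - w (Fin.last n)) / w j0 with hc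
      set v : Fin (2 * n) → K := fun k =>
        if hk : (k : ℕ) < n then w ⟨k, by omega⟩
        else if (k : ℕ) = n + j0 then c else 0 with hvdef
      have hx : ∀ (j : ℕ) (hj : j < n) (hj2 : j < 2 * n),
          v ⟨j, hj2⟩ = w ⟨j, by omega⟩ := by
        intro j hj hj2
        rw [hvdef]
        exact dif_pos hj
      have hterm : ∀ (j : Fin n) (hj2 : n + (j : ℕ) < 2 * n),
          v ⟨n + j, hj2⟩ = if (j : ℕ) = (j0 : ℕ) then c else 0 := by
        intro j hj2
        rw [hvdef]
        refine (dif_neg (show ¬ n + (j : ℕ) < n by omega)).trans ?_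
        simp only [Nat.add_left_cancel_iff]
      refine ⟨v, ?_⟩
      dsimp only
      apply mk_congr
      funext i
      rw [heval]
      by_cases hi : (i : ℕ) < n
      · rw [dif_pos hi, hx i hi (by omega)]
      · have hil : i = Fin.last n := Fin.ext (by have := i.isLt; simp only [Fin.val_last]; omega)
        rw [dif_neg hi]
        have hsum : (∑ j : Fin n, v ⟨j, by omega⟩ * v ⟨n + j, by omega⟩)
            = 1 - w (Fin.last n) := by
          have hcongr : (∑ j : Fin n, v ⟨j, by omega⟩ * v ⟨n + j, by omega⟩)
              = ∑ j : Fin n, w ⟨j, by omega⟩ * (if (j : ℕ) = (j0 : ℕ) then c else 0) :=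
            Finset.sum_congr rfl (fun j _ => by
              rw [hx j j.isLt (by omega), hterm j (by omega)])
          rw [hcongr, Finset.sum_eq_single (⟨j0, hj0⟩ : Fin n)]
          · rw [if_pos rfl]
            have hwj : w (⟨((⟨(j0 : ℕ), hj0⟩ : Fin n) : ℕ), by omega⟩ : Fin (n + 1)) = w j0 :=
              congrArg w (Fin.ext rfl)
            rw [hwj, hc, mul_comm, div_mul_cancel₀ _ hwj0]
          · intro b _ hb
            rw [if_neg (fun hcontra => hb (Fin.ext hcontra)), mul_zero]
          · simp
        rw [hsum, hil]
        ring
end
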